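/- Every caterpillar is a midpoint unit veto interval (MUVI) graph. -/

import Mathlib

set_option maxHeartbeats 1000000

/-- A veto interval: a closed interval `[l, r]` with a veto mark `v`, `l < v < r`. -/
structure VetoInterval where
  l : ℝ
  v : ℝ
  r : ℝ
  hlv : l < v
  hvr : v < r

/-- Two veto intervals are adjacent iff they intersect and neither contains
the veto mark of the other. -/
def VIAdj (a b : VetoInterval) : Prop :=
  (a.v < b.l ∧ b.l < a.r ∧ a.r < b.v) ∨ (b.v < a.l ∧ a.l < b.r ∧ b.r < a.v)

/-- `G` is a veto interval graph. -/
def IsVIGraph {V : Type*} (G : SimpleGraph V) : Prop :=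
  ∃ f : V → VetoInterval, ∀ a b : V, G.Adj a b ↔ VIAdj (f a) (f b)

/-- `G` is a caterpillar: a tree with a path (the spine) such that every
vertex is at distance at most one from the spine. -/
def IsCaterpillar {V : Type*} (G : SimpleGraph V) : Prop :=
  G.IsTree ∧ ∃ (u w : V) (p : G.Walk u w), p.IsPath ∧
    ∀ v : V, ∃ s ∈ p.support, v = s ∨ G.Adj v s

/-- `G` is a midpoint unit veto interval (MUVI) graph. -/
def IsMUVIGraph {V : Type*} (G : SimpleGraph V) : Prop :=
  ∃ f : V → VetoInterval,
    (∀ a b : V, G.Adj a b ↔ VIAdj (f a) (f b)) ∧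
    (∀ a b : V, (f a).r - (f a).l = (f b).r - (f b).l) ∧
    (∀ a : V, (f a).v = ((f a).l + (f a).r) / 2)

namespace MUVIAux

/-- the "midpoint" adjacency relation for unit intervals of length 2 -/
abbrev MR (x y : ℝ) : Prop := (1 < y - x ∧ y - x < 2) ∨ (1 < x - y ∧ x - y < 2)

lemma MR_comm {x y : ℝ} : MR x y ↔ MR y x := or_comm

def off (n : ℕ) : ℝ := if Even n then -1.4 else 1.4

lemma off_cases (n : ℕ) : off n = -1.4 ∨ off n = 1.4 := by
  unfold off; split <;> simp

lemma off_succ (n : ℕ) : off (n+1) = - off n := by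
  unfold off
  by_cases h : Even n <;> simp [Nat.even_add_one, h]

lemma nat_bound {i j : ℕ} (h : 1.9*(j:ℝ) - 1.9*i < 5.7) (h' : 1.9*(i:ℝ) - 1.9*j < 5.7) :
    j = i ∨ j = i+1 ∨ i = j+1 ∨ j = i+2 ∨ i = j+2 := by
  have h1 : ¬ (i + 3 ≤ j) := by
    intro hle
    have : (i:ℝ) + 3 ≤ j := by exact_mod_cast hle
    linarith
  have h2 : ¬ (j + 3 ≤ i) := by
    intro hle
    have : (j:ℝ) + 3 ≤ i := by exact_mod_cast hle
    linarith
  omega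

lemma arithSS (i j : ℕ) : MR (1.9*i) (1.9*j) ↔ (j = i + 1 ∨ i = j + 1) := by
  constructor
  · rintro (⟨h1, h2⟩ | ⟨h1, h2⟩)
    · rcases nat_bound (i := i) (j := j) (by linarith) (by linarith) with h|h|h|h|h
      · subst h; linarith
      · exact Or.inl h
      · subst h; push_cast at h1 h2; linarith
      · subst h; push_cast at h1 h2; linarith
      · subst h; push_cast at h1 h2; linarith
    · rcases nat_bound (i := i) (j := j) (by linarith) (by linarith) with h|h|h|h|h
      · subst h; linarith
      · subst h; push_cast at h1 h2; linarith
      · exact Or.inr h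
      · subst h; push_cast at h1 h2; linarith
      · subst h; push_cast at h1 h2; linarith
  · rintro (rfl | rfl)
    · exact Or.inl ⟨by push_cast; linarith, by push_cast; linarith⟩
    · exact Or.inr ⟨by push_cast; linarith, by push_cast; linarith⟩

lemma arithSL (i j : ℕ) : MR (1.9*i) (1.9*j + off j) ↔ i = j := by
  constructor
  · intro hmr
    rcases off_cases j with ho | ho <;> rw [ho] at hmr <;>
      rcases hmr with ⟨h1, h2⟩ | ⟨h1, h2⟩ <;>
      · rcases nat_bound (i := i) (j := j) (by linarith) (by linarith) with h|h|h|h|h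
        · exact h.symm
        all_goals (subst h; push_cast at h1 h2; linarith)
  · rintro rfl
    rcases off_cases i with ho | ho <;> rw [ho]
    · exact Or.inr ⟨by linarith, by linarith⟩
    · exact Or.inl ⟨by linarith, by linarith⟩

lemma arithLL (i j : ℕ) : ¬ MR (1.9*i + off i) (1.9*j + off j) := by
  intro hmr
  have hoi := off_cases i
  have hoj := off_cases j
  have hbd : j = i ∨ j = i+1 ∨ i = j+1 ∨ j = i+2 ∨ i = j+2 := by
    rcases hmr with ⟨h1, h2⟩ | ⟨h1, h2⟩ <;>
      rcases hoi with ho | ho <;> rw [ho] at h1 h2 <;>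
      rcases hoj with ho' | ho' <;> rw [ho'] at h1 h2 <;>
      exact nat_bound (by linarith) (by linarith)
  rcases hbd with h|h|h|h|h
  · subst h
    rcases hmr with ⟨h1, h2⟩ | ⟨h1, h2⟩ <;> linarith
  · subst h
    rw [off_succ] at hmr
    rcases hmr with ⟨h1, h2⟩ | ⟨h1, h2⟩ <;> push_cast at h1 h2 <;>
      rcases off_cases i with ho | ho <;> rw [ho] at h1 h2 <;> linarith
  · subst h
    rw [off_succ] at hmr
    rcases hmr with ⟨h1, h2⟩ | ⟨h1, h2⟩ <;> push_cast at h1 h2 <;>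
      rcases off_cases j with ho | ho <;> rw [ho] at h1 h2 <;> linarith
  · subst h
    have h2 : off (i + 2) = off i := by rw [show i + 2 = (i+1)+1 from rfl, off_succ, off_succ]; ring
    rw [h2] at hmr
    rcases hmr with ⟨h1, h2⟩ | ⟨h1, h2⟩ <;> push_cast at h1 h2 <;> linarith
  · subst h
    have h2 : off (j + 2) = off j := by rw [show j + 2 = (j+1)+1 from rfl, off_succ, off_succ]; ring
    rw [h2] at hmr
    rcases hmr with ⟨h1, h2⟩ | ⟨h1, h2⟩ <;> push_cast at h1 h2 <;> linarith

lemma muvi_iff (x y : ℝ) :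
    MR x y ↔ VIAdj ⟨x-1, x, x+1, by linarith, by linarith⟩ ⟨y-1, y, y+1, by linarith, by linarith⟩ := by
  show MR x y ↔ ((x < y - 1 ∧ y - 1 < x + 1 ∧ x + 1 < y) ∨ (y < x - 1 ∧ x - 1 < y + 1 ∧ y + 1 < x))
  constructor
  · rintro (⟨h1, h2⟩ | ⟨h1, h2⟩)
    · exact Or.inl ⟨by linarith, by linarith, by linarith⟩
    · exact Or.inr ⟨by linarith, by linarith, by linarith⟩
  · rintro (⟨h1, h2, h3⟩ | ⟨h1, h2, h3⟩)
    · exact Or.inl ⟨by linarith, by linarith⟩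
    · exact Or.inr ⟨by linarith, by linarith⟩

lemma indexOf_eq_of_getElem? {α : Type*} [DecidableEq α] {l : List α} (hnd : l.Nodup)
    {z : α} (hz : z ∈ l) {n : ℕ} (hzn : l[n]? = some z) : l.idxOf z = n := by
  rw [List.getElem?_eq_some_iff] at hzn
  obtain ⟨hlt, hget⟩ := hzn
  have hi : l[l.idxOf z]'(List.idxOf_lt_length_iff.2 hz) = z :=
    List.getElem_idxOf (List.idxOf_lt_length_iff.2 hz)
  have key : (⟨l.idxOf z, List.idxOf_lt_length_iff.2 hz⟩ : Fin l.length) = ⟨n, hlt⟩ :=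
    List.nodup_iff_injective_getElem.1 hnd (by simpa using hi.trans hget.symm)
  exact congrArg Fin.val key

lemma indexOf_inj {α : Type*} [DecidableEq α] {l : List α}
    {x y : α} (hx : x ∈ l) (hy : y ∈ l) (hxy : l.idxOf x = l.idxOf y) : x = y := by
  have h1 : l[l.idxOf x]'(List.idxOf_lt_length_iff.2 hx) = x :=
    List.getElem_idxOf (List.idxOf_lt_length_iff.2 hx)
  have h2 : l[l.idxOf y]'(List.idxOf_lt_length_iff.2 hy) = y :=
    List.getElem_idxOf (List.idxOf_lt_length_iff.2 hy)
  rw [← h1, ← h2]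
  congr 1

lemma adj_consec {V : Type*} {G : SimpleGraph V} (hG : G.IsAcyclic) {a b : V} (hab : G.Adj a b) :
    ∀ {u w : V} (p : G.Walk u w), p.IsPath → a ∈ p.support → b ∈ p.support →
      ∃ n, (p.support[n]? = some a ∧ p.support[n+1]? = some b) ∨
           (p.support[n]? = some b ∧ p.support[n+1]? = some a) := by
  classical
  intro u w p
  induction p with
  | nil =>
    intro _ ha hb
    simp only [SimpleGraph.Walk.support_nil, List.mem_singleton] at ha hb
    exact absurd (ha.trans hb.symm) hab.ne
  | @cons u v' w h q ih =>
    intro hp ha hb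
    rw [SimpleGraph.Walk.cons_isPath_iff] at hp
    rw [SimpleGraph.Walk.support_cons] at ha hb ⊢
    rcases List.mem_cons.1 ha with rfl | haq
    · rcases List.mem_cons.1 hb with rfl | hbq
      · exact absurd rfl hab.ne
      · -- a = u, b in q.support; show v' = b
        have hP1 : (SimpleGraph.Walk.cons hab SimpleGraph.Walk.nil : G.Walk a b).IsPath := by
          rw [SimpleGraph.Walk.cons_isPath_iff]
          refine ⟨SimpleGraph.Walk.IsPath.nil, ?_⟩
          simp [hab.ne]
        have hP2 : (SimpleGraph.Walk.cons h (q.takeUntil b hbq) : G.Walk a b).IsPath := by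
          rw [SimpleGraph.Walk.cons_isPath_iff]
          exact ⟨hp.1.takeUntil hbq, fun hc => hp.2 (q.support_takeUntil_subset hbq hc)⟩
        have heq := hG.path_unique ⟨_, hP1⟩ ⟨_, hP2⟩
        rw [Subtype.mk.injEq] at heq
        have hlen := congrArg SimpleGraph.Walk.length heq
        simp only [SimpleGraph.Walk.length_cons, SimpleGraph.Walk.length_nil] at hlen
        have h0 : (q.takeUntil b hbq).length = 0 := by omega
        have hvb : v' = b := SimpleGraph.Walk.eq_of_length_eq_zero h0
        refine ⟨0, Or.inl ⟨by simp, ?_⟩⟩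
        rw [q.support_eq_cons]
        simp [hvb]
    · rcases List.mem_cons.1 hb with rfl | hbq
      · -- b = u, a in q.support; show v' = a
        have hP1 : (SimpleGraph.Walk.cons hab.symm SimpleGraph.Walk.nil : G.Walk b a).IsPath := by
          rw [SimpleGraph.Walk.cons_isPath_iff]
          refine ⟨SimpleGraph.Walk.IsPath.nil, ?_⟩
          simp [hab.ne']
        have hP2 : (SimpleGraph.Walk.cons h (q.takeUntil a haq) : G.Walk b a).IsPath := by
          rw [SimpleGraph.Walk.cons_isPath_iff]
          exact ⟨hp.1.takeUntil haq, fun hc => hp.2 (q.support_takeUntil_subset haq hc)⟩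
        have heq := hG.path_unique ⟨_, hP1⟩ ⟨_, hP2⟩
        rw [Subtype.mk.injEq] at heq
        have hlen := congrArg SimpleGraph.Walk.length heq
        simp only [SimpleGraph.Walk.length_cons, SimpleGraph.Walk.length_nil] at hlen
        have h0 : (q.takeUntil a haq).length = 0 := by omega
        have hva : v' = a := SimpleGraph.Walk.eq_of_length_eq_zero h0
        refine ⟨0, Or.inr ⟨by simp, ?_⟩⟩
        rw [q.support_eq_cons]
        simp [hva]
      · obtain ⟨n, hn⟩ := ih hp.1 haq hbq
        refine ⟨n + 1, ?_⟩
        simpa [List.getElem?_cons_succ] using hn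

end MUVIAux

/-- Every caterpillar is a MUVI graph. -/
theorem stmt_7 {V : Type*} [Fintype V] (G : SimpleGraph V)
    (h : IsCaterpillar G) : IsMUVIGraph G := by
  classical
  obtain ⟨htree, u, w, p, hp, hcov⟩ := h
  have hacyc : G.IsAcyclic := htree.IsAcyclic
  have hnd : p.support.Nodup := hp.support_nodup
  have hsel : ∀ v : V, ∃ s, s ∈ p.support ∧ (v = s ∨ G.Adj v s) := by
    intro v; obtain ⟨s, hs1, hs2⟩ := hcov v; exact ⟨s, hs1, hs2⟩
  choose σ0 hσmem hσadj using hsel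
  set σ : V → V := fun v => if v ∈ p.support then v else σ0 v with hσdef
  have σ_mem : ∀ v, σ v ∈ p.support := by
    intro v; by_cases hv : v ∈ p.support <;> simp [hσdef, hv, hσmem]
  have σ_spine : ∀ v ∈ p.support, σ v = v := by
    intro v hv; simp [hσdef, hv]
  have σ_adj : ∀ v ∉ p.support, G.Adj v (σ v) := by
    intro v hv
    rcases hσadj v with heq | hadj
    · exact absurd (show v ∈ p.support by rw [heq]; exact hσmem v) hv
    · simpa [hσdef, hv] using hadj
  have hne_of : ∀ z t : V, z ∉ p.support → t ∈ p.support → z ≠ t :=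
    fun z t hz ht hh => hz (by rw [hh]; exact ht)
  set idx : V → ℕ := fun v => p.support.idxOf (σ v) with hidxdef
  have idx_spine : ∀ v ∈ p.support, idx v = p.support.idxOf v := by
    intro v hv; simp [hidxdef, σ_spine v hv]
  -- paths between spine vertices stay on the spine
  have seg : ∀ x ∈ p.support, ∀ y ∈ p.support,
      ∃ q : G.Walk x y, q.IsPath ∧ ∀ z ∈ q.support, z ∈ p.support := by
    intro x hx y hy
    refine ⟨((p.takeUntil x hx).reverse.append (p.takeUntil y hy)).bypass,
      SimpleGraph.Walk.bypass_isPath _, ?_⟩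
    intro z hz
    have hz' := SimpleGraph.Walk.support_bypass_subset _ hz
    rw [SimpleGraph.Walk.support_append] at hz'
    rcases List.mem_append.1 hz' with h1 | h2
    · rw [SimpleGraph.Walk.support_reverse] at h1
      exact p.support_takeUntil_subset hx (List.mem_reverse.1 h1)
    · exact p.support_takeUntil_subset hy (List.mem_of_mem_tail h2)
  -- a non-spine vertex has a unique spine neighbour, namely σ
  have hC2 : ∀ x s, x ∉ p.support → s ∈ p.support → G.Adj x s → s = σ x := by
    intro x s hx hs hadj
    by_contra hne
    have hxσ : x ≠ σ x := hne_of x (σ x) hx (σ_mem x)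
    obtain ⟨q, hq, hqsub⟩ := seg s hs (σ x) (σ_mem x)
    have hP1 : (SimpleGraph.Walk.cons hadj.symm
        (SimpleGraph.Walk.cons (σ_adj x hx) SimpleGraph.Walk.nil) : G.Walk s (σ x)).IsPath := by
      rw [SimpleGraph.Walk.cons_isPath_iff, SimpleGraph.Walk.cons_isPath_iff]
      refine ⟨⟨SimpleGraph.Walk.IsPath.nil, by simpa using hxσ⟩, ?_⟩
      simp only [SimpleGraph.Walk.support_cons, SimpleGraph.Walk.support_nil, List.mem_cons,
        List.mem_singleton, List.not_mem_nil]
      push_neg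
      exact ⟨hadj.ne', hne, by simp⟩
    have heq := hacyc.path_unique ⟨_, hP1⟩ ⟨q, hq⟩
    rw [Subtype.mk.injEq] at heq
    have hxq : x ∈ q.support := by rw [← heq]; simp
    exact hx (hqsub x hxq)
  -- no edges between non-spine vertices
  have hC3 : ∀ x y, x ∉ p.support → y ∉ p.support → ¬ G.Adj x y := by
    intro x y hx hy hadj
    have hxσ : x ≠ σ x := hne_of x (σ x) hx (σ_mem x)
    have hyσ : y ≠ σ y := hne_of y (σ y) hy (σ_mem y)
    by_cases hss : σ x = σ y
    · have hyx : G.Adj y (σ x) := by rw [hss]; exact σ_adj y hy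
      have hP1 : (SimpleGraph.Walk.cons (σ_adj x hx) SimpleGraph.Walk.nil :
          G.Walk x (σ x)).IsPath := by
        rw [SimpleGraph.Walk.cons_isPath_iff]
        exact ⟨SimpleGraph.Walk.IsPath.nil, by simpa using hxσ⟩
      have hP2 : (SimpleGraph.Walk.cons hadj
          (SimpleGraph.Walk.cons hyx SimpleGraph.Walk.nil) : G.Walk x (σ x)).IsPath := by
        rw [SimpleGraph.Walk.cons_isPath_iff, SimpleGraph.Walk.cons_isPath_iff]
        refine ⟨⟨SimpleGraph.Walk.IsPath.nil, by simpa using hne_of y (σ x) hy (σ_mem x)⟩, ?_⟩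
        simp only [SimpleGraph.Walk.support_cons, SimpleGraph.Walk.support_nil, List.mem_cons,
          List.mem_singleton, List.not_mem_nil]
        push_neg
        exact ⟨hadj.ne, hxσ, by simp⟩
      have heq := hacyc.path_unique ⟨_, hP1⟩ ⟨_, hP2⟩
      rw [Subtype.mk.injEq] at heq
      have hlen := congrArg SimpleGraph.Walk.length heq
      simp only [SimpleGraph.Walk.length_cons, SimpleGraph.Walk.length_nil] at hlen
      omega
    · obtain ⟨q, hq, hqsub⟩ := seg (σ x) (σ_mem x) (σ y) (σ_mem y)
      have hP2 : (SimpleGraph.Walk.cons (σ_adj x hx) q : G.Walk x (σ y)).IsPath := by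
        rw [SimpleGraph.Walk.cons_isPath_iff]
        exact ⟨hq, fun hc => hx (hqsub x hc)⟩
      have hP1 : (SimpleGraph.Walk.cons hadj
          (SimpleGraph.Walk.cons (σ_adj y hy) SimpleGraph.Walk.nil) : G.Walk x (σ y)).IsPath := by
        rw [SimpleGraph.Walk.cons_isPath_iff, SimpleGraph.Walk.cons_isPath_iff]
        refine ⟨⟨SimpleGraph.Walk.IsPath.nil, by simpa using hyσ⟩, ?_⟩
        simp only [SimpleGraph.Walk.support_cons, SimpleGraph.Walk.support_nil, List.mem_cons,
          List.mem_singleton, List.not_mem_nil]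
        push_neg
        exact ⟨hadj.ne, hne_of x (σ y) hx (σ_mem y), by simp⟩
      have heq := hacyc.path_unique ⟨_, hP1⟩ ⟨_, hP2⟩
      rw [Subtype.mk.injEq] at heq
      have hyq : y ∈ (SimpleGraph.Walk.cons (σ_adj x hx) q).support := by rw [← heq]; simp
      rw [SimpleGraph.Walk.support_cons] at hyq
      rcases List.mem_cons.1 hyq with hh | hh
      · exact hadj.ne hh.symm
      · exact hy (hqsub y hh)
  -- adjacency along the spine is exactly index-consecutiveness
  have hSS : ∀ x, x ∈ p.support → ∀ y, y ∈ p.support →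
      (G.Adj x y ↔ (p.support.idxOf y = p.support.idxOf x + 1 ∨
                    p.support.idxOf x = p.support.idxOf y + 1)) := by
    intro x hx y hy
    constructor
    · intro hadj
      obtain ⟨n, hn | hn⟩ := MUVIAux.adj_consec hacyc hadj p hp hx hy
      · left
        have e1 := MUVIAux.indexOf_eq_of_getElem? hnd hx hn.1
        have e2 := MUVIAux.indexOf_eq_of_getElem? hnd hy hn.2
        omega
      · right
        have e1 := MUVIAux.indexOf_eq_of_getElem? hnd hy hn.1
        have e2 := MUVIAux.indexOf_eq_of_getElem? hnd hx hn.2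
        omega
    · have hch := List.isChain_iff_getElem.1 p.isChain_adj_support
      have hxlt : p.support.idxOf x < p.support.length := List.idxOf_lt_length_iff.2 hx
      have hylt : p.support.idxOf y < p.support.length := List.idxOf_lt_length_iff.2 hy
      intro hij
      rcases hij with hij | hij
      · have hadj' := hch (p.support.idxOf x) (by omega)
        have key : G.Adj x y := by
          convert hadj' using 2
          · exact (List.getElem_idxOf hxlt).symm
          · have h9 : p.support[p.support.idxOf y]? = some y := List.getElem?_idxOf hy
            rw [hij] at h9
            obtain ⟨h8, h7⟩ := List.getElem?_eq_some_iff.1 h9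
            exact h7.symm
        exact key
      · have hadj' := hch (p.support.idxOf y) (by omega)
        have key : G.Adj y x := by
          convert hadj' using 2
          · exact (List.getElem_idxOf hylt).symm
          · have h9 : p.support[p.support.idxOf x]? = some x := List.getElem?_idxOf hx
            rw [hij] at h9
            obtain ⟨h8, h7⟩ := List.getElem?_eq_some_iff.1 h9
            exact h7.symm
        exact key.symm
  -- the midpoint assignment
  set g : V → ℝ := fun v =>
    if v ∈ p.support then 1.9 * (idx v : ℝ) else 1.9 * (idx v : ℝ) + MUVIAux.off (idx v)
    with hgdef
  have main : ∀ a b : V, G.Adj a b ↔ MUVIAux.MR (g a) (g b) := by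
    intro a b
    by_cases ha : a ∈ p.support <;> by_cases hb : b ∈ p.support
    · have hga : g a = 1.9 * (p.support.idxOf a : ℝ) := by
        simp [hgdef, ha, idx_spine a ha]
      have hgb : g b = 1.9 * (p.support.idxOf b : ℝ) := by
        simp [hgdef, hb, idx_spine b hb]
      rw [hSS a ha b hb, hga, hgb, MUVIAux.arithSS]
    · have hab_iff : G.Adj a b ↔ p.support.idxOf a = idx b := by
        constructor
        · intro hadj
          have h1 : a = σ b := hC2 b a hb ha hadj.symm
          simp [hidxdef, ← h1]
        · intro h1
          have h2 : a = σ b := MUVIAux.indexOf_inj ha (σ_mem b) (by simpa [hidxdef] using h1)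
          rw [h2]; exact (σ_adj b hb).symm
      have hga : g a = 1.9 * (p.support.idxOf a : ℝ) := by
        simp [hgdef, ha, idx_spine a ha]
      have hgb : g b = 1.9 * (idx b : ℝ) + MUVIAux.off (idx b) := by
        simp [hgdef, hb]
      rw [hab_iff, hga, hgb, MUVIAux.arithSL]
    · have hab_iff : G.Adj a b ↔ p.support.idxOf b = idx a := by
        constructor
        · intro hadj
          have h1 : b = σ a := hC2 a b ha hb hadj
          simp [hidxdef, ← h1]
        · intro h1
          have h2 : b = σ a := MUVIAux.indexOf_inj hb (σ_mem a) (by simpa [hidxdef] using h1)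
          rw [h2]; exact σ_adj a ha
      have hga : g a = 1.9 * (idx a : ℝ) + MUVIAux.off (idx a) := by
        simp [hgdef, ha]
      have hgb : g b = 1.9 * (p.support.idxOf b : ℝ) := by
        simp [hgdef, hb, idx_spine b hb]
      rw [hab_iff, hga, hgb, MUVIAux.MR_comm, MUVIAux.arithSL]
    · have hga : g a = 1.9 * (idx a : ℝ) + MUVIAux.off (idx a) := by
        simp [hgdef, ha]
      have hgb : g b = 1.9 * (idx b : ℝ) + MUVIAux.off (idx b) := by
        simp [hgdef, hb]
      rw [hga, hgb]
      exact iff_of_false (hC3 a b ha hb) (MUVIAux.arithLL _ _)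
  refine ⟨fun v => ⟨g v - 1, g v, g v + 1, by linarith, by linarith⟩, fun a b => ?_,
    fun a b => show (g a + 1) - (g a - 1) = (g b + 1) - (g b - 1) by ring,
    fun a => show g a = ((g a - 1) + (g a + 1)) / 2 by ring⟩
  rw [main a b]
  exact MUVIAux.muvi_iff (g a) (g b)
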